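/- Deleting a special bidder improves the objective when another special bidder is present: suppose r > 0, w_j, w_k > 0 with j ≠ k both in S_o, c_j > r·e^{−w_j}·w_j, and w_j ≥ e^{−w_k}·(e^{w_j} − 1). Let W = ∑_{i∈S_o} w_i and C = ∑_{i∈S_o} c_i, with w_k ≤ W − w_j. Then r·(1 − e^{−(W − w_j)}) − (C − c_j) > r·(1 − e^{−W}) − C. -/
import Mathlib


/-- Deleting a special bidder improves the objective when another special bidder
is present: if `r > 0`, `w_j, w_k > 0`, `c_j > r e^{-w_j} w_j`,
`w_j ≥ e^{-w_k} (e^{w_j} - 1)`, and `w_k ≤ W - w_j`, then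
`r (1 - e^{-(W - w_j)}) - (C - c_j) > r (1 - e^{-W}) - C`. -/
theorem stmt_13 (r wj wk cj W C : ℝ) (hr : 0 < r) (hwj : 0 < wj) (hwk : 0 < wk)
    (hcj : cj > r * Real.exp (-wj) * wj)
    (hineq : wj ≥ Real.exp (-wk) * (Real.exp wj - 1))
    (hwkW : wk ≤ W - wj) :
    r * (1 - Real.exp (-(W - wj))) - (C - cj) > r * (1 - Real.exp (-W)) - C := by
  have h1 : (0:ℝ) < Real.exp wj - 1 := by
    nlinarith [Real.add_one_lt_exp hwj.ne']
  have hmono : Real.exp (-(W - wj)) ≤ Real.exp (-wk) := Real.exp_le_exp.mpr (by linarith)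
  have key : r * (Real.exp (-(W - wj)) - Real.exp (-W)) < cj := by
    have heq : Real.exp (-(W - wj)) - Real.exp (-W)
        = Real.exp (-wj) * (Real.exp (-(W - wj)) * (Real.exp wj - 1)) := by
      have h0 : Real.exp (-wj) * Real.exp wj = 1 := by
        rw [← Real.exp_add]; simp
      have hW : Real.exp (-W) = Real.exp (-wj) * Real.exp (-(W - wj)) := by
        rw [← Real.exp_add]; ring_nf
      linear_combination -Real.exp (-(W - wj)) * h0 - hW
    have h2 : Real.exp (-(W - wj)) * (Real.exp wj - 1) ≤ wj := by
      calc Real.exp (-(W - wj)) * (Real.exp wj - 1)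
          ≤ Real.exp (-wk) * (Real.exp wj - 1) := by nlinarith
        _ ≤ wj := hineq
    have hep : 0 < Real.exp (-wj) := Real.exp_pos _
    calc r * (Real.exp (-(W - wj)) - Real.exp (-W))
        = r * Real.exp (-wj) * (Real.exp (-(W - wj)) * (Real.exp wj - 1)) := by
          rw [heq]; ring
      _ ≤ r * Real.exp (-wj) * wj := by nlinarith [mul_pos hr hep]
      _ < cj := hcj
  linarith
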